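/- Let Q ⊆ ℕ² be the submonoid generated by (N,0), (0,N), (1,1). The ℂ-algebra homomorphism ℂ[Q] → ℂ[u,v] induced by the monoid inclusion Q ↪ ℕ² (i.e., sending the monomial of (a,b) ∈ Q to u^a v^b) is injective, with image equal to the invariant ring ℂ[u,v]^G for the cyclic group action g·u = εu, g·v = ε⁻¹v, where ε is a primitive N-th root of unity. -/

import Mathlib

open MvPolynomial

/-- The embedding ℕ² → (Fin 2 →₀ ℕ). -/
private noncomputable def eemb (p : ℕ × ℕ) : Fin 2 →₀ ℕ := Finsupp.single 0 p.1 + Finsupp.single 1 p.2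

private lemma eemb_apply0 (p : ℕ × ℕ) : eemb p 0 = p.1 := by
  simp [eemb, Finsupp.single_apply]

private lemma eemb_apply1 (p : ℕ × ℕ) : eemb p 1 = p.2 := by
  simp [eemb, Finsupp.single_apply]

private lemma eemb_inj : Function.Injective eemb := by
  intro p q h
  have h0 : eemb p 0 = eemb q 0 := by rw [h]
  have h1 : eemb p 1 = eemb q 1 := by rw [h]
  rw [eemb_apply0, eemb_apply0] at h0
  rw [eemb_apply1, eemb_apply1] at h1
  exact Prod.ext h0 h1

private lemma eemb_surj (m : Fin 2 →₀ ℕ) : eemb (m 0, m 1) = m := by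
  ext i
  fin_cases i <;> simp [eemb, Finsupp.single_apply]

private lemma mem_Q_iff {N : ℕ} (a b : ℕ) :
    (a, b) ∈ AddSubmonoid.closure ({(N, 0), (0, N), (1, 1)} : Set (ℕ × ℕ)) ↔
      a % N = b % N := by
  constructor
  · intro h
    have key : ∀ p : ℕ × ℕ,
        p ∈ AddSubmonoid.closure ({(N, 0), (0, N), (1, 1)} : Set (ℕ × ℕ)) →
        p.1 % N = p.2 % N := by
      intro p hp
      induction hp using AddSubmonoid.closure_induction with
      | mem x hx =>
        rcases hx with h | h | h <;> subst h <;> simp [Nat.mod_self]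
      | zero => rfl
      | add x y _ _ ihx ihy =>
        show (x.1 + y.1) % N = (x.2 + y.2) % N
        rw [Nat.add_mod, Nat.add_mod x.2, ihx, ihy]
    exact key (a, b) h
  · intro h
    have h1 : ((1, 1) : ℕ × ℕ) ∈ AddSubmonoid.closure ({(N, 0), (0, N), (1, 1)} : Set (ℕ × ℕ)) :=
      AddSubmonoid.subset_closure (by simp)
    have h2 : ((0, N) : ℕ × ℕ) ∈ AddSubmonoid.closure ({(N, 0), (0, N), (1, 1)} : Set (ℕ × ℕ)) :=
      AddSubmonoid.subset_closure (by simp)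
    have h3 : ((N, 0) : ℕ × ℕ) ∈ AddSubmonoid.closure ({(N, 0), (0, N), (1, 1)} : Set (ℕ × ℕ)) :=
      AddSubmonoid.subset_closure (by simp)
    rcases le_total a b with hab | hab
    · have hd : N ∣ b - a := (Nat.modEq_iff_dvd' hab).mp h
      obtain ⟨k, hk⟩ := hd
      have : (a, b) = a • ((1, 1) : ℕ × ℕ) + k • ((0, N) : ℕ × ℕ) := by
        simp only [Prod.smul_mk, smul_eq_mul, Prod.mk_add_mk, Prod.mk.injEq]
        rw [mul_comm N k] at hk
        omega
      rw [this]
      exact AddSubmonoid.add_mem _ (AddSubmonoid.nsmul_mem _ h1 a) (AddSubmonoid.nsmul_mem _ h2 k)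
    · have hd : N ∣ a - b := (Nat.modEq_iff_dvd' hab).mp h.symm
      obtain ⟨k, hk⟩ := hd
      have : (a, b) = b • ((1, 1) : ℕ × ℕ) + k • ((N, 0) : ℕ × ℕ) := by
        simp only [Prod.smul_mk, smul_eq_mul, Prod.mk_add_mk, Prod.mk.injEq]
        rw [mul_comm N k] at hk
        omega
      rw [this]
      exact AddSubmonoid.add_mem _ (AddSubmonoid.nsmul_mem _ h1 b) (AddSubmonoid.nsmul_mem _ h3 k)


private lemma monomial_eemb (m : Fin 2 →₀ ℕ) (c : ℂ) :
    (monomial m c : MvPolynomial (Fin 2) ℂ) = C c * X 0 ^ m 0 * X 1 ^ m 1 := by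
  conv_lhs => rw [← eemb_surj m]
  rw [eemb, X_pow_eq_monomial, X_pow_eq_monomial, mul_assoc, monomial_mul, C_mul_monomial]
  simp


/-- The `ℂ`-algebra map `ℂ[Q] → ℂ[u,v]` induced by the inclusion `Q ↪ ℕ²` (sending the
monomial of `(a,b) ∈ Q` to `u^a v^b`) is injective, with image the invariant ring
`ℂ[u,v]^G` for the cyclic action `u ↦ εu`, `v ↦ ε⁻¹v`, `ε` a primitive `N`-th root of 1. -/
theorem monoidAlgebra_map_injective_range (N : ℕ) (hN : 0 < N) (ε : ℂ)
    (hε : IsPrimitiveRoot ε N)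
    (φ : AddMonoidAlgebra ℂ
          (AddSubmonoid.closure ({(N, 0), (0, N), (1, 1)} : Set (ℕ × ℕ)))
        →ₐ[ℂ] MvPolynomial (Fin 2) ℂ)
    (hφ : ∀ q : AddSubmonoid.closure ({(N, 0), (0, N), (1, 1)} : Set (ℕ × ℕ)),
      φ (AddMonoidAlgebra.single q 1) = X 0 ^ (q : ℕ × ℕ).1 * X 1 ^ (q : ℕ × ℕ).2) :
    Function.Injective φ
    ∧ φ.range
      = AlgHom.equalizer
          (aeval ![C ε * X 0, C ε⁻¹ * X 1] :
            MvPolynomial (Fin 2) ℂ →ₐ[ℂ] MvPolynomial (Fin 2) ℂ)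
          (AlgHom.id ℂ (MvPolynomial (Fin 2) ℂ)) := by
  set σ : MvPolynomial (Fin 2) ℂ →ₐ[ℂ] MvPolynomial (Fin 2) ℂ :=
    aeval ![C ε * X 0, C ε⁻¹ * X 1] with hσdef
  have hεne : ε ≠ 0 := hε.ne_zero hN.ne'
  -- φ on a general single
  have hφ' : ∀ (q : AddSubmonoid.closure ({(N, 0), (0, N), (1, 1)} : Set (ℕ × ℕ))) (c : ℂ),
      φ (AddMonoidAlgebra.single q c) = monomial (eemb (q : ℕ × ℕ)) c := by
    intro q c
    have h1 : (AddMonoidAlgebra.single q c :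
        AddMonoidAlgebra ℂ (AddSubmonoid.closure ({(N, 0), (0, N), (1, 1)} : Set (ℕ × ℕ))))
        = c • AddMonoidAlgebra.single q 1 := by
      rw [AddMonoidAlgebra.smul_single', mul_one]
    rw [h1, map_smul, hφ q, smul_eq_C_mul, monomial_eemb, eemb_apply0, eemb_apply1, mul_assoc]
  -- φ as mapDomain
  have hφmap : ∀ p, φ p = AddMonoidAlgebra.mapDomain
      (fun q : AddSubmonoid.closure ({(N, 0), (0, N), (1, 1)} : Set (ℕ × ℕ)) =>
        eemb (q : ℕ × ℕ)) p := by
    intro p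
    induction p using AddMonoidAlgebra.induction_linear with
    | zero => simp
    | add p q hp hq => rw [map_add, hp, hq, AddMonoidAlgebra.mapDomain_add]
    | single q c =>
      rw [AddMonoidAlgebra.mapDomain_single, single_eq_monomial]
      exact hφ' q c
  have hinj : Function.Injective φ := by
    intro x y h
    rw [hφmap x, hφmap y] at h
    exact AddMonoidAlgebra.mapDomain_injective (eemb_inj.comp Subtype.val_injective) h
  -- ε powers
  have hεpow : ∀ a b : ℕ, ε ^ a = ε ^ b ↔ a % N = b % N := by
    have key : ∀ a b : ℕ, a ≤ b → (ε ^ a = ε ^ b ↔ a % N = b % N) := by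
      intro a b hab
      constructor
      · intro h
        have h2 : ε ^ (b - a) * ε ^ a = 1 * ε ^ a := by
          rw [one_mul, ← pow_add, Nat.sub_add_cancel hab, h]
        have h3 := mul_right_cancel₀ (pow_ne_zero a hεne) h2
        have hd := (hε.pow_eq_one_iff_dvd _).mp h3
        exact (Nat.modEq_iff_dvd' hab).mpr hd
      · intro h
        have hd : N ∣ b - a := (Nat.modEq_iff_dvd' hab).mp h
        have h3 : ε ^ (b - a) = 1 := (hε.pow_eq_one_iff_dvd _).mpr hd
        calc ε ^ a = ε ^ (b - a) * ε ^ a := by rw [h3, one_mul]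
          _ = ε ^ b := by rw [← pow_add, Nat.sub_add_cancel hab]
    intro a b
    rcases le_total a b with hab | hab
    · exact key a b hab
    · rw [eq_comm, key b a hab, eq_comm]
  -- action of σ on monomials
  have hσmono : ∀ (m : Fin 2 →₀ ℕ) (c : ℂ),
      σ (monomial m c) = monomial m (c * (ε ^ m 0 * ε⁻¹ ^ m 1)) := by
    intro m c
    rw [monomial_eemb, monomial_eemb]
    rw [hσdef]
    simp only [map_mul, map_pow, aeval_C, aeval_X, Matrix.cons_val_zero, Matrix.cons_val_one,
      Matrix.head_cons, algebraMap_eq, map_inv₀]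
    ring
  have hcoeff : ∀ (f : MvPolynomial (Fin 2) ℂ) (m : Fin 2 →₀ ℕ),
      coeff m (σ f) = coeff m f * (ε ^ m 0 * ε⁻¹ ^ m 1) := by
    intro f m
    induction f using MvPolynomial.induction_on' with
    | monomial u a =>
      rw [hσmono]
      by_cases h : u = m
      · subst h; simp [coeff_monomial]
      · simp [coeff_monomial, h]
    | add p q hp hq =>
      rw [map_add, coeff_add, coeff_add, hp, hq, add_mul]
  refine ⟨hinj, le_antisymm ?_ ?_⟩
  · rintro x ⟨p, rfl⟩
    rw [AlgHom.mem_equalizer, AlgHom.id_apply]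
    show σ (φ p) = φ p
    induction p using AddMonoidAlgebra.induction_linear with
    | zero => simp
    | add p q hp hq => rw [map_add, map_add, hp, hq]
    | single q c =>
      rw [
        hφ' q c, hσmono, eemb_apply0, eemb_apply1]
      have hmod : (q : ℕ × ℕ).1 % N = (q : ℕ × ℕ).2 % N :=
        (mem_Q_iff _ _).mp (by rw [Prod.mk.eta]; exact q.2)
      have hpow : ε ^ (q : ℕ × ℕ).1 = ε ^ (q : ℕ × ℕ).2 := (hεpow _ _).mpr hmod
      rw [inv_pow, hpow, mul_inv_cancel₀ (pow_ne_zero _ hεne), mul_one]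
  · intro f hf
    rw [AlgHom.mem_equalizer, AlgHom.id_apply] at hf
    have hmem : ∀ m ∈ f.support, ((m 0 : ℕ), (m 1 : ℕ))
        ∈ AddSubmonoid.closure ({(N, 0), (0, N), (1, 1)} : Set (ℕ × ℕ)) := by
      intro m hm
      have hc : coeff m f ≠ 0 := mem_support_iff.mp hm
      have h1 : coeff m f * (ε ^ m 0 * ε⁻¹ ^ m 1) = coeff m f * 1 := by
        rw [mul_one, ← hcoeff, hf]
      have h2 : ε ^ m 0 * ε⁻¹ ^ m 1 = 1 := mul_left_cancel₀ hc h1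
      have h3 : ε ^ m 0 = ε ^ m 1 := by
        rw [inv_pow] at h2
        field_simp at h2
        exact h2
      exact (mem_Q_iff _ _).mpr ((hεpow _ _).mp h3)
    rw [AlgHom.mem_range]
    refine ⟨∑ m ∈ f.support.attach,
      AddMonoidAlgebra.single (⟨(m.1 0, m.1 1), hmem m.1 m.2⟩ :
        AddSubmonoid.closure ({(N, 0), (0, N), (1, 1)} : Set (ℕ × ℕ))) (coeff m.1 f), ?_⟩
    rw [map_sum]
    have hterm : ∀ m ∈ f.support.attach,
        φ (AddMonoidAlgebra.single (⟨(m.1 0, m.1 1), hmem m.1 m.2⟩ :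
            AddSubmonoid.closure ({(N, 0), (0, N), (1, 1)} : Set (ℕ × ℕ))) (coeff m.1 f))
          = monomial m.1 (coeff m.1 f) := by
      intro m _
      rw [hφ']
      exact congrArg (fun t => monomial t (coeff m.1 f)) (eemb_surj m.1)
    rw [Finset.sum_congr rfl hterm,
      Finset.sum_attach f.support (fun m => monomial m (coeff m f))]
    exact f.support_sum_monomial_coeff
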